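/- Let G be a bipartite graph with parts V₁ and V₂, each of size n ≥ 1, in which every vertex has at least one neighbor. If G has no perfect matching, then there exists a set K, contained either in V₁ or in V₂, such that: (i) the neighborhood Γ(K) satisfies |Γ(K)| = |K| − 1; (ii) 2 ≤ |K| ≤ ⌈n/2⌉; and (iii) every vertex of Γ(K) has at least two neighbors in K. -/
import Mathlib

open Classical in
private noncomputable def NS {A B : Type*} [Fintype B] (R : A → B → Prop) (S : Finset A) : Finset B :=
  Finset.univ.filter fun b => ∃ a ∈ S, R a b

open Classical in
private theorem NS_mono {A B : Type*} [Fintype B] (R : A → B → Prop) {S T : Finset A}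
    (h : S ⊆ T) : NS R S ⊆ NS R T := by
  intro b hb
  simp only [NS, Finset.mem_filter, Finset.mem_univ, true_and] at hb ⊢
  obtain ⟨a, ha, hr⟩ := hb
  exact ⟨a, h ha, hr⟩

open Classical in
private theorem aux {A B : Type*} [Fintype A] [Fintype B] (n : ℕ)
    (hA : Fintype.card A = n) (hB : Fintype.card B = n)
    (R : A → B → Prop) (hdeg : ∀ a : A, ∃ b, R a b)
    (K : Finset A) (hK : (NS R K).card < K.card)
    (hmin1 : ∀ S : Finset A, (NS R S).card < S.card → K.card ≤ S.card)
    (hmin2 : ∀ S : Finset B, (NS (fun b a => R a b) S).card < S.card → K.card ≤ S.card) :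
    (NS R K).card = K.card - 1 ∧ 2 ≤ K.card ∧ K.card ≤ (n + 1) / 2 ∧
      ∀ b ∈ NS R K, 2 ≤ (K.filter fun a => R a b).card := by
  have hKne : K.Nonempty := Finset.card_pos.mp (by omega)
  -- NS R K is nonempty
  obtain ⟨a0, ha0⟩ := hKne
  obtain ⟨b0, hb0⟩ := hdeg a0
  have hNne : (NS R K).Nonempty := ⟨b0, by
    simp only [NS, Finset.mem_filter, Finset.mem_univ, true_and]
    exact ⟨a0, ha0, hb0⟩⟩
  have hK2 : 2 ≤ K.card := by
    have := Finset.card_pos.mpr hNne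
    omega
  -- erase one element: not a violator by minimality
  have herase : ∀ a ∈ K, K.card - 1 ≤ (NS R (K.erase a)).card := by
    intro a ha
    by_contra h
    push_neg at h
    have hc : (K.erase a).card = K.card - 1 := Finset.card_erase_of_mem ha
    have := hmin1 (K.erase a) (by omega)
    omega
  have hcard : (NS R K).card = K.card - 1 := by
    have h1 := herase a0 ha0
    have h2 : NS R (K.erase a0) ⊆ NS R K := NS_mono R (Finset.erase_subset _ _)
    have := Finset.card_le_card h2
    omega
  have hKn : K.card ≤ n := by
    have := Finset.card_le_card (Finset.subset_univ K)
    simpa [hA] using this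
  -- size bound via complement
  have hbound : K.card ≤ (n + 1) / 2 := by
    set K' : Finset B := Finset.univ \ NS R K with hK'def
    have hK'card : K'.card = n - (K.card - 1) := by
      rw [hK'def, Finset.card_sdiff_of_subset (Finset.subset_univ _), hcard]
      simp [hB]
    have hsub : NS (fun b a => R a b) K' ⊆ Finset.univ \ K := by
      intro a ha
      simp only [NS, Finset.mem_filter, Finset.mem_univ, true_and] at ha
      obtain ⟨b, hb, hr⟩ := ha
      simp only [Finset.mem_sdiff, Finset.mem_univ, true_and]
      intro haK
      rw [hK'def] at hb
      simp only [Finset.mem_sdiff, Finset.mem_univ, true_and] at hb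
      exact hb (by
        simp only [NS, Finset.mem_filter, Finset.mem_univ, true_and]
        exact ⟨a, haK, hr⟩)
    have h1 : (NS (fun b a => R a b) K').card ≤ n - K.card := by
      have := Finset.card_le_card hsub
      rwa [Finset.card_sdiff_of_subset (Finset.subset_univ _), Finset.card_univ, hA] at this
    have hviol : (NS (fun b a => R a b) K').card < K'.card := by omega
    have := hmin2 K' hviol
    omega
  refine ⟨hcard, hK2, hbound, ?_⟩
  intro b hb
  by_contra h
  push_neg at h
  simp only [NS, Finset.mem_filter, Finset.mem_univ, true_and] at hb
  obtain ⟨a, ha, hr⟩ := hb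
  have hamem : a ∈ K.filter fun a => R a b := Finset.mem_filter.mpr ⟨ha, hr⟩
  have h1 : (K.filter fun a => R a b).card = 1 := by
    have := Finset.card_pos.mpr ⟨a, hamem⟩
    omega
  obtain ⟨a', ha'⟩ := Finset.card_eq_one.mp h1
  have haa' : a = a' := by
    have := hamem; rw [ha'] at this; simpa using this
  subst haa'
  -- K.erase a is a smaller violator
  have hsub : NS R (K.erase a) ⊆ (NS R K).erase b := by
    intro j hj
    simp only [NS, Finset.mem_filter, Finset.mem_univ, true_and] at hj
    obtain ⟨a'', ha'', hr''⟩ := hj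
    have ha''K : a'' ∈ K := Finset.mem_of_mem_erase ha''
    refine Finset.mem_erase.mpr ⟨?_, ?_⟩
    · intro hjb
      subst hjb
      have : a'' ∈ K.filter fun a => R a j := Finset.mem_filter.mpr ⟨ha''K, hr''⟩
      rw [ha'] at this
      simp only [Finset.mem_singleton] at this
      exact (Finset.mem_erase.mp ha'').1 this
    · simp only [NS, Finset.mem_filter, Finset.mem_univ, true_and]
      exact ⟨a'', ha''K, hr''⟩
  have hbN : b ∈ NS R K := by
    simp only [NS, Finset.mem_filter, Finset.mem_univ, true_and]
    exact ⟨a, ha, hr⟩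
  have h2 : (NS R (K.erase a)).card ≤ (NS R K).card - 1 := by
    have := Finset.card_le_card hsub
    rw [Finset.card_erase_of_mem hbN] at this
    exact this
  have hec : (K.erase a).card = K.card - 1 := Finset.card_erase_of_mem ha
  have := hmin1 (K.erase a) (by omega)
  omega

open Classical in
/-- If a bipartite graph with parts of size `n ≥ 1` and no isolated vertices has
no perfect matching, there is a Hall witness `K` (on one of the two sides) with
`|Γ(K)| = |K| − 1`, `2 ≤ |K| ≤ ⌈n/2⌉`, and every vertex of `Γ(K)` having at least
two neighbours in `K`. -/
theorem statement_3 {V₁ V₂ : Type*} [Fintype V₁] [Fintype V₂]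
    (n : ℕ) (hn : 1 ≤ n) (hV₁ : Fintype.card V₁ = n) (hV₂ : Fintype.card V₂ = n)
    (E : V₁ → V₂ → Prop)
    (hdeg₁ : ∀ i : V₁, ∃ j : V₂, E i j) (hdeg₂ : ∀ j : V₂, ∃ i : V₁, E i j)
    (hnoPM : ¬ ∃ π : V₁ ≃ V₂, ∀ i, E i (π i)) :
    (∃ K : Finset V₁,
        (Finset.univ.filter fun j : V₂ => ∃ i ∈ K, E i j).card = K.card - 1 ∧
        2 ≤ K.card ∧ K.card ≤ (n + 1) / 2 ∧
        ∀ j ∈ Finset.univ.filter fun j : V₂ => ∃ i ∈ K, E i j,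
          2 ≤ (K.filter fun i => E i j).card) ∨
    (∃ K : Finset V₂,
        (Finset.univ.filter fun i : V₁ => ∃ j ∈ K, E i j).card = K.card - 1 ∧
        2 ≤ K.card ∧ K.card ≤ (n + 1) / 2 ∧
        ∀ i ∈ Finset.univ.filter fun i : V₁ => ∃ j ∈ K, E i j,
          2 ≤ (K.filter fun j => E i j).card) := by
  -- there exists a Hall violator on side 1
  have hviol : ∃ S : Finset V₁, (NS E S).card < S.card := by
    by_contra h
    push_neg at h
    set t : V₁ → Finset V₂ := fun i => Finset.univ.filter fun j => E i j with ht
    have hbi : ∀ S : Finset V₁, S.biUnion t = NS E S := by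
      intro S
      ext j
      simp [ht, NS]
    have hhall : ∀ S : Finset V₁, S.card ≤ (S.biUnion t).card := by
      intro S; rw [hbi]; exact h S
    obtain ⟨f, hinj, hf⟩ :=
      (Finset.all_card_le_biUnion_card_iff_exists_injective t).mp hhall
    have hbij : Function.Bijective f :=
      (Fintype.bijective_iff_injective_and_card f).mpr ⟨hinj, by omega⟩
    exact hnoPM ⟨Equiv.ofBijective f hbij, fun i => by
      have := hf i; simpa [ht] using this⟩
  -- P c : there is a violator of size c on either side
  set P : ℕ → Prop := fun c =>
    (∃ S : Finset V₁, S.card = c ∧ (NS E S).card < S.card) ∨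
    (∃ S : Finset V₂, S.card = c ∧ (NS (fun j i => E i j) S).card < S.card) with hP
  have hPex : ∃ c, P c := by
    obtain ⟨S, hS⟩ := hviol
    exact ⟨S.card, Or.inl ⟨S, rfl, hS⟩⟩
  have hdec : DecidablePred P := Classical.decPred P
  set c := Nat.find hPex with hc
  have hPc : P c := Nat.find_spec hPex
  have hPmin : ∀ m, m < c → ¬ P m := fun m hm => Nat.find_min hPex hm
  have hmin1 : ∀ S : Finset V₁, (NS E S).card < S.card → c ≤ S.card := by
    intro S hS
    by_contra hlt
    exact hPmin S.card (by omega) (Or.inl ⟨S, rfl, hS⟩)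
  have hmin2 : ∀ S : Finset V₂, (NS (fun j i => E i j) S).card < S.card → c ≤ S.card := by
    intro S hS
    by_contra hlt
    exact hPmin S.card (by omega) (Or.inr ⟨S, rfl, hS⟩)
  rcases hPc with ⟨K, hKc, hKv⟩ | ⟨K, hKc, hKv⟩
  · left
    obtain ⟨h1, h2, h3, h4⟩ := aux n hV₁ hV₂ E hdeg₁ K hKv
      (fun S hS => hKc ▸ hmin1 S hS) (fun S hS => hKc ▸ hmin2 S hS)
    exact ⟨K, h1, h2, h3, h4⟩
  · right
    obtain ⟨h1, h2, h3, h4⟩ := aux n hV₂ hV₁ (fun j i => E i j) hdeg₂ K hKv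
      (fun S hS => hKc ▸ hmin2 S hS) (fun S hS => hKc ▸ hmin1 S hS)
    exact ⟨K, h1, h2, h3, h4⟩
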